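/- For a bounded open convex domain D, the reverse-Funk distance function extends continuously from D × D to D × closure(D), and a sequence z_n in D converges to the reverse-Funk horofunction r_x = R(·,x) − R(b,x), x ∈ ∂D, if and only if z_n → x in the Euclidean topology. -/

import Mathlib

open Filter Topology

noncomputable section
open scoped Classical

/-- The Funk metric on a convex domain `D`: for `x ≠ y`,
`funk D x y = log (‖x - z‖ / ‖y - z‖)` where `z = x + T • (y - x)` is the point
where the ray from `x` through `y` meets `∂D` (here
`T = sSup {t | x + t • (y - x) ∈ D}`, so that
`‖x - z‖ / ‖y - z‖ = T / (T - 1)`). -/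
def funk {n : ℕ} (D : Set (EuclideanSpace ℝ (Fin n)))
    (x y : EuclideanSpace ℝ (Fin n)) : ℝ :=
  if x = y then 0
  else Real.log (sSup {t : ℝ | x + t • (y - x) ∈ D} /
    (sSup {t : ℝ | x + t • (y - x) ∈ D} - 1))

namespace RFaux

variable {n : ℕ} {D : Set (EuclideanSpace ℝ (Fin n))}

def seg (D : Set (EuclideanSpace ℝ (Fin n))) (y p : EuclideanSpace ℝ (Fin n)) : Set ℝ :=
  {t : ℝ | y + t • (p - y) ∈ D}

lemma funk_eq {y p : EuclideanSpace ℝ (Fin n)} (h : y ≠ p) :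
    funk D y p = Real.log (sSup (seg D y p) / (sSup (seg D y p) - 1)) := by
  unfold funk seg; rw [if_neg h]

lemma funk_self {y : EuclideanSpace ℝ (Fin n)} : funk D y y = 0 := if_pos rfl

lemma one_mem_seg {y p : EuclideanSpace ℝ (Fin n)} (hp : p ∈ D) : (1:ℝ) ∈ seg D y p := by
  simp only [seg, Set.mem_setOf_eq, one_smul, add_sub_cancel]
  exact hp

/-- key convexity lemma -/
lemma seg_mem (hconv : Convex ℝ D) (hopen : IsOpen D)
    {y p : EuclideanSpace ℝ (Fin n)} (hy : y ∈ closure D) (hp : p ∈ D) {s t : ℝ}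
    (hs : y + s • (p - y) ∈ closure D) (h0 : 0 < t) (h1 : t ≤ 1 ∨ t < s) :
    t ∈ seg D y p := by
  have hpi : p ∈ interior D := by rwa [hopen.interior_eq]
  rcases le_or_gt t 1 with ht1 | ht1
  · have key : t • p + (1 - t) • y = y + t • (p - y) := by module
    have := hconv.combo_interior_closure_mem_interior (a := t) (b := 1 - t) hpi hy h0
      (by linarith) (by ring)
    rw [key, hopen.interior_eq] at this
    exact this
  · have hts : t < s := by
      rcases h1 with h | h
      · linarith
      · exact h
    have hs1 : (1:ℝ) < s := lt_trans ht1 hts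
    have hs1' : s - 1 ≠ 0 := by intro h; rw [sub_eq_zero] at h; linarith
    have ha : 0 < (s - t) / (s - 1) := div_pos (by linarith) (by linarith)
    have hb : 0 ≤ (t - 1) / (s - 1) := div_nonneg (by linarith) (by linarith)
    have hab : (s - t) / (s - 1) + (t - 1) / (s - 1) = 1 := by
      field_simp
      ring
    have key : ((s - t) / (s - 1)) • p + ((t - 1) / (s - 1)) • (y + s • (p - y))
        = y + t • (p - y) := by
      match_scalars <;> field_simp <;> ring
    have := hconv.combo_interior_closure_mem_interior hpi hs ha hb hab
    rw [key, hopen.interior_eq] at this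
    exact this

lemma seg_le {R : ℝ} (hR : ∀ w ∈ closure D, ‖w‖ ≤ R)
    {y p : EuclideanSpace ℝ (Fin n)} (hy : y ∈ closure D) (hne : p ≠ y)
    {t : ℝ} (ht : t ∈ seg D y p) : t ≤ 2 * R / ‖p - y‖ := by
  have hpy : (0:ℝ) < ‖p - y‖ := by
    rw [norm_pos_iff]; exact sub_ne_zero_of_ne hne
  have hR0 : 0 ≤ R := le_trans (norm_nonneg y) (hR y hy)
  rcases le_or_gt t 0 with h | h
  · exact le_trans h (by positivity)
  · have h1 : ‖y + t • (p - y)‖ ≤ R := hR _ (subset_closure ht)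
    have h2 : ‖t • (p - y)‖ ≤ ‖y + t • (p - y)‖ + ‖y‖ := by
      have := norm_sub_le (y + t • (p - y)) y
      simpa using this
    have h3 : t * ‖p - y‖ ≤ 2 * R := by
      rw [norm_smul, Real.norm_eq_abs, abs_of_pos h] at h2
      have := hR y hy
      linarith
    exact (le_div_iff₀ hpy).mpr h3

lemma seg_bddAbove {R : ℝ} (hR : ∀ w ∈ closure D, ‖w‖ ≤ R)
    {y p : EuclideanSpace ℝ (Fin n)} (hy : y ∈ closure D) (hne : p ≠ y) :
    BddAbove (seg D y p) :=
  ⟨2 * R / ‖p - y‖, fun _ ht => seg_le hR hy hne ht⟩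

lemma T_gt_one (hopen : IsOpen D)
    {y p : EuclideanSpace ℝ (Fin n)} (hp : p ∈ D) (hne : p ≠ y)
    (bdd : BddAbove (seg D y p)) : 1 < sSup (seg D y p) := by
  obtain ⟨δ, hδ, hball⟩ := Metric.isOpen_iff.1 hopen p hp
  have hpy : (0:ℝ) < ‖p - y‖ := by rw [norm_pos_iff]; exact sub_ne_zero_of_ne hne
  set ε := δ / (2 * ‖p - y‖) with hε
  have hε0 : 0 < ε := by positivity
  have hmem : 1 + ε ∈ seg D y p := by
    apply hball
    have : y + (1 + ε) • (p - y) - p = ε • (p - y) := by module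
    rw [Metric.mem_ball, dist_eq_norm, this, norm_smul, Real.norm_eq_abs, abs_of_pos hε0]
    calc ε * ‖p - y‖ = δ / 2 := by rw [hε]; field_simp
    _ < δ := by linarith
  calc (1:ℝ) < 1 + ε := by linarith
  _ ≤ sSup (seg D y p) := le_csSup bdd hmem

lemma Ioo_subset_seg (hconv : Convex ℝ D) (hopen : IsOpen D)
    {y p : EuclideanSpace ℝ (Fin n)} (hy : y ∈ closure D) (hp : p ∈ D) :
    Set.Ioo 0 (sSup (seg D y p)) ⊆ seg D y p := by
  rintro t ⟨ht0, htT⟩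
  obtain ⟨t₀, ht₀, htt₀⟩ := exists_lt_of_lt_csSup ⟨1, one_mem_seg hp⟩ htT
  exact seg_mem hconv hopen hy hp (subset_closure ht₀) ht0 (Or.inr htt₀)

lemma not_mem_closure_of_gt (hconv : Convex ℝ D) (hopen : IsOpen D)
    {y p : EuclideanSpace ℝ (Fin n)} (hy : y ∈ closure D) (hp : p ∈ D)
    (bdd : BddAbove (seg D y p)) {s : ℝ}
    (hsT : sSup (seg D y p) < s) (hs1 : 1 < s) :
    y + s • (p - y) ∉ closure D := by
  intro hmem
  set t := (max 1 (sSup (seg D y p)) + s) / 2 with htdef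
  have h1 : max 1 (sSup (seg D y p)) < s := by
    rw [max_lt_iff]; exact ⟨hs1, hsT⟩
  have ht1 : 1 < t := by
    have : (1:ℝ) ≤ max 1 (sSup (seg D y p)) := le_max_left _ _
    have : max 1 (sSup (seg D y p)) < t := by rw [htdef]; linarith
    linarith
  have hts : t < s := by rw [htdef]; linarith
  have htseg : t ∈ seg D y p := seg_mem hconv hopen hy hp hmem (by linarith) (Or.inr hts)
  have : t ≤ sSup (seg D y p) := le_csSup bdd htseg
  have : sSup (seg D y p) < t := by
    calc sSup (seg D y p) ≤ max 1 (sSup (seg D y p)) := le_max_right _ _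
    _ < t := by rw [htdef]; linarith
  linarith

lemma funk_le (hconv : Convex ℝ D) (hopen : IsOpen D) {R : ℝ}
    (hR : ∀ w ∈ closure D, ‖w‖ ≤ R)
    {y p : EuclideanSpace ℝ (Fin n)} (hy : y ∈ closure D) (hp : p ∈ D) (hne : p ≠ y)
    {N : ℝ} (hN : 2 ≤ N) (hmem : y + N • (p - y) ∈ D) :
    funk D y p ≤ 1 / (N - 1) := by
  have bdd := seg_bddAbove hR hy hne
  set T := sSup (seg D y p) with hT
  have hNT : N ≤ T := le_csSup bdd hmem
  have hT1 : 1 < T := T_gt_one hopen hp hne bdd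
  rw [funk_eq (fun h => hne (by rw [h]))]
  have h1 : T / (T - 1) ≤ N / (N - 1) := by
    rw [div_le_div_iff₀ (by linarith) (by linarith)]
    nlinarith
  have h2 : Real.log (T / (T - 1)) ≤ Real.log (N / (N - 1)) :=
    Real.log_le_log (div_pos (by linarith) (by linarith)) h1
  have h3 : Real.log (N / (N - 1)) ≤ N / (N - 1) - 1 :=
    Real.log_le_sub_one_of_pos (by apply div_pos <;> linarith)
  have hN1 : N - 1 ≠ 0 := by intro h; rw [sub_eq_zero] at h; linarith
  have h4 : N / (N - 1) - 1 = 1 / (N - 1) := by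
    field_simp
    ring
  rw [h4] at h3
  exact le_trans h2 h3

lemma funk_nonneg (hopen : IsOpen D) {R : ℝ} (hR : ∀ w ∈ closure D, ‖w‖ ≤ R)
    {y p : EuclideanSpace ℝ (Fin n)} (hy : y ∈ closure D) (hp : p ∈ D) :
    0 ≤ funk D y p := by
  by_cases h : y = p
  · rw [h, funk_self]
  · have hne : p ≠ y := fun h' => h h'.symm
    have bdd := seg_bddAbove hR hy hne
    have hT1 : 1 < sSup (seg D y p) := T_gt_one hopen hp hne bdd
    rw [funk_eq h]
    apply Real.log_nonneg
    rw [le_div_iff₀ (by linarith)]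
    linarith

lemma funk_lower (hopen : IsOpen D)
    {y p : EuclideanSpace ℝ (Fin n)} (hy : y ∈ closure D) (hp : p ∈ D) (hne : p ≠ y)
    {C : ℝ} (hC : 2 ≤ C) (hseg : ∀ t ∈ seg D y p, t ≤ C) :
    Real.log (C / (C - 1)) ≤ funk D y p := by
  have bdd : BddAbove (seg D y p) := ⟨C, fun t ht => hseg t ht⟩
  set T := sSup (seg D y p) with hT
  have hTC : T ≤ C := csSup_le ⟨1, one_mem_seg hp⟩ hseg
  have hT1 : 1 < T := T_gt_one hopen hp hne bdd
  rw [funk_eq (fun h => hne (by rw [h]))]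
  apply Real.log_le_log (by apply div_pos <;> linarith)
  rw [div_le_div_iff₀ (by linarith) (by linarith)]
  nlinarith

lemma log_ratio_pos {C : ℝ} (hC : 2 ≤ C) : 0 < Real.log (C / (C - 1)) := by
  apply Real.log_pos
  rw [lt_div_iff₀ (by linarith)]
  linarith

lemma funk_pos (hopen : IsOpen D) {R : ℝ} (hR : ∀ w ∈ closure D, ‖w‖ ≤ R)
    {y p : EuclideanSpace ℝ (Fin n)} (hy : y ∈ closure D) (hp : p ∈ D) (hne : p ≠ y) :
    0 < funk D y p := by
  set C := max 2 (2 * R / ‖p - y‖) with hC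
  have hC2 : 2 ≤ C := le_max_left _ _
  have hseg : ∀ t ∈ seg D y p, t ≤ C := fun t ht =>
    le_trans (seg_le hR hy hne ht) (le_max_right _ _)
  exact lt_of_lt_of_le (log_ratio_pos hC2) (funk_lower hopen hy hp hne hC2 hseg)
lemma T_tendsto (hconv : Convex ℝ D) (hopen : IsOpen D) {R : ℝ}
    (hR : ∀ w ∈ closure D, ‖w‖ ≤ R)
    {p₀ y₀ : EuclideanSpace ℝ (Fin n)} (hp₀ : p₀ ∈ D) (hy₀ : y₀ ∈ closure D)
    (hne : p₀ ≠ y₀) :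
    Tendsto (fun q : EuclideanSpace ℝ (Fin n) × EuclideanSpace ℝ (Fin n) =>
      sSup (seg D q.2 q.1)) (𝓝[D ×ˢ closure D] (p₀, y₀)) (𝓝 (sSup (seg D y₀ p₀))) := by
  have bdd := seg_bddAbove hR hy₀ hne
  set T₀ := sSup (seg D y₀ p₀) with hT₀
  have hT₀1 : 1 < T₀ := T_gt_one hopen hp₀ hne bdd
  have hne_ev : ∀ᶠ q : EuclideanSpace ℝ (Fin n) × EuclideanSpace ℝ (Fin n) in
      𝓝[D ×ˢ closure D] (p₀, y₀), q.1 ≠ q.2 := by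
    apply eventually_nhdsWithin_of_eventually_nhds
    have hopen' : IsOpen {q : EuclideanSpace ℝ (Fin n) × EuclideanSpace ℝ (Fin n) |
        q.1 ≠ q.2} := isOpen_ne_fun continuous_fst continuous_snd
    exact hopen'.eventually_mem hne
  have hmem_ev : ∀ᶠ q : EuclideanSpace ℝ (Fin n) × EuclideanSpace ℝ (Fin n) in
      𝓝[D ×ˢ closure D] (p₀, y₀), q ∈ D ×ˢ closure D := eventually_mem_nhdsWithin
  rw [tendsto_order]
  constructor
  · intro c hc
    set t := (max c 1 + T₀) / 2 with ht
    have h1 : max c 1 < T₀ := by rw [max_lt_iff]; exact ⟨hc, hT₀1⟩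
    have ht0 : 0 < t := by
      have : (1:ℝ) ≤ max c 1 := le_max_right _ _
      rw [ht]; linarith
    have htT : t < T₀ := by rw [ht]; linarith
    have hct : c < t := by
      have : c ≤ max c 1 := le_max_left _ _
      rw [ht]; linarith
    have hD : y₀ + t • (p₀ - y₀) ∈ D :=
      Ioo_subset_seg hconv hopen hy₀ hp₀ ⟨ht0, htT⟩
    have hcont : Continuous (fun q : EuclideanSpace ℝ (Fin n) × EuclideanSpace ℝ (Fin n) =>
        q.2 + t • (q.1 - q.2)) :=
      continuous_snd.add ((continuous_fst.sub continuous_snd).const_smul t)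
    have hev : ∀ᶠ q : EuclideanSpace ℝ (Fin n) × EuclideanSpace ℝ (Fin n) in
        𝓝[D ×ˢ closure D] (p₀, y₀), q.2 + t • (q.1 - q.2) ∈ D := by
      apply eventually_nhdsWithin_of_eventually_nhds
      exact (hopen.preimage hcont).eventually_mem hD
    filter_upwards [hev, hne_ev, hmem_ev] with q hq hqne hqmem
    have hq2 : q.2 ∈ closure D := hqmem.2
    have : t ≤ sSup (seg D q.2 q.1) := le_csSup (seg_bddAbove hR hq2 hqne) hq
    linarith
  · intro c hc
    set t := (T₀ + c) / 2 with ht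
    have ht1 : 1 < t := by rw [ht]; linarith
    have htT : T₀ < t := by rw [ht]; linarith
    have htc : t < c := by rw [ht]; linarith
    have hnotin : y₀ + t • (p₀ - y₀) ∉ closure D :=
      not_mem_closure_of_gt hconv hopen hy₀ hp₀ bdd htT ht1
    have hcont : Continuous (fun q : EuclideanSpace ℝ (Fin n) × EuclideanSpace ℝ (Fin n) =>
        q.2 + t • (q.1 - q.2)) :=
      continuous_snd.add ((continuous_fst.sub continuous_snd).const_smul t)
    have hev : ∀ᶠ q : EuclideanSpace ℝ (Fin n) × EuclideanSpace ℝ (Fin n) in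
        𝓝[D ×ˢ closure D] (p₀, y₀), q.2 + t • (q.1 - q.2) ∉ closure D := by
      apply eventually_nhdsWithin_of_eventually_nhds
      exact (isClosed_closure.isOpen_compl.preimage hcont).eventually_mem hnotin
    filter_upwards [hev, hne_ev, hmem_ev] with q hq hqne hqmem
    have hq1 : q.1 ∈ D := hqmem.1
    have hq2 : q.2 ∈ closure D := hqmem.2
    have hle : sSup (seg D q.2 q.1) ≤ t := by
      by_contra h
      push_neg at h
      have : q.2 + t • (q.1 - q.2) ∈ D :=
        Ioo_subset_seg hconv hopen hq2 hq1 ⟨by linarith, h⟩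
      exact hq (subset_closure this)
    linarith

lemma funk_continuousOn (hconv : Convex ℝ D) (hopen : IsOpen D) {R : ℝ}
    (hR : ∀ w ∈ closure D, ‖w‖ ≤ R) :
    ContinuousOn (fun q : EuclideanSpace ℝ (Fin n) × EuclideanSpace ℝ (Fin n) =>
      funk D q.2 q.1) (D ×ˢ closure D) := by
  rintro ⟨p₀, y₀⟩ ⟨hp₀, hy₀⟩
  by_cases h : p₀ = y₀
  · -- diagonal case: y₀ = p₀ ∈ D
    have hy₀D : y₀ ∈ D := h ▸ hp₀
    have hval : funk D y₀ p₀ = 0 := by rw [h, funk_self]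
    show Tendsto (fun q : EuclideanSpace ℝ (Fin n) × EuclideanSpace ℝ (Fin n) =>
      funk D q.2 q.1) (𝓝[D ×ˢ closure D] (p₀, y₀)) (𝓝 (funk D y₀ p₀))
    rw [hval, Metric.tendsto_nhdsWithin_nhds]
    intro ε hε
    obtain ⟨s₀, hs₀, hball⟩ := Metric.isOpen_iff.1 hopen y₀ hy₀D
    set N := 2 + 1/ε with hN
    have hε0 : 0 < 1/ε := by positivity
    have hN2 : 2 ≤ N := by rw [hN]; linarith
    have hN0 : (0:ℝ) < N := by linarith
    have hNinv : 1 / (N - 1) < ε := by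
      have h1 : 1/ε < N - 1 := by rw [hN]; linarith
      calc 1 / (N - 1) < 1 / (1/ε) := one_div_lt_one_div_of_lt hε0 h1
      _ = ε := one_div_one_div ε
    refine ⟨s₀ / (4 * N), by positivity, ?_⟩
    rintro ⟨p, y⟩ ⟨hp, hy⟩ hdist
    rw [Prod.dist_eq, max_lt_iff] at hdist
    have hd1 : dist p p₀ < s₀ / (4 * N) := hdist.1
    have hd2 : dist y y₀ < s₀ / (4 * N) := hdist.2
    rw [h] at hd1
    by_cases hpy : y = p
    · rw [hpy, funk_self]; simpa using hε
    · have hpy' : p ≠ y := fun h' => hpy h'.symm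
      have hp' : p ∈ D := hp
      have hy' : y ∈ closure D := hy
      have hNseg : y + N • (p - y) ∈ D := by
        apply hball
        rw [Metric.mem_ball, dist_eq_norm]
        have he : y + N • (p - y) - y₀ = (y - y₀) + N • (p - y) := by module
        rw [he]
        have h3 : ‖p - y₀‖ < s₀ / (4*N) := by rw [← dist_eq_norm]; exact hd1
        have h5 : ‖y - y₀‖ < s₀ / (4*N) := by rw [← dist_eq_norm]; exact hd2
        have h2 : ‖p - y‖ ≤ ‖p - y₀‖ + ‖y₀ - y‖ := norm_sub_le_norm_sub_add_norm_sub p y₀ y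
        have h4 : ‖y₀ - y‖ < s₀ / (4*N) := by rw [norm_sub_rev]; exact h5
        have e1 : N * (s₀ / (4*N) + s₀ / (4*N)) = s₀/2 := by
          field_simp; ring
        calc ‖(y - y₀) + N • (p - y)‖ ≤ ‖y - y₀‖ + ‖N • (p - y)‖ := norm_add_le _ _
        _ = ‖y - y₀‖ + N * ‖p - y‖ := by
            rw [norm_smul, Real.norm_eq_abs, abs_of_pos hN0]
        _ < s₀ / (4*N) + N * (s₀ / (4*N) + s₀ / (4*N)) := by
            have : N * ‖p - y‖ < N * (s₀ / (4*N) + s₀ / (4*N)) :=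
              mul_lt_mul_of_pos_left (by linarith) hN0
            linarith
        _ ≤ s₀ := by
            rw [e1]
            have h6 : s₀ / (4*N) ≤ s₀ / 2 := by
              apply div_le_div_of_nonneg_left (le_of_lt hs₀) (by linarith)
              linarith
            linarith
      have hfle : funk D y p ≤ 1 / (N - 1) :=
        funk_le hconv hopen hR hy' hp' hpy' hN2 hNseg
      have hfnn : 0 ≤ funk D y p := funk_nonneg hopen hR hy' hp'
      rw [Real.dist_eq, sub_zero, abs_of_nonneg hfnn]
      linarith
  · -- off-diagonal
    have hne : y₀ ≠ p₀ := fun h' => h h'.symm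
    have bdd := seg_bddAbove hR hy₀ h
    set T₀ := sSup (seg D y₀ p₀) with hT₀
    have hT₀1 : 1 < T₀ := T_gt_one hopen hp₀ h bdd
    have hT := T_tendsto hconv hopen hR hp₀ hy₀ h
    have hlog : Tendsto (fun q : EuclideanSpace ℝ (Fin n) × EuclideanSpace ℝ (Fin n) =>
        Real.log (sSup (seg D q.2 q.1) / (sSup (seg D q.2 q.1) - 1)))
        (𝓝[D ×ˢ closure D] (p₀, y₀)) (𝓝 (Real.log (T₀ / (T₀ - 1)))) := by
      apply (Real.continuousAt_log _).tendsto.comp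
      · exact hT.div (hT.sub tendsto_const_nhds) (by intro h'; rw [sub_eq_zero] at h'; linarith)
      · have : 0 < T₀ / (T₀ - 1) := div_pos (by linarith) (by linarith)
        linarith
    show Tendsto (fun q : EuclideanSpace ℝ (Fin n) × EuclideanSpace ℝ (Fin n) =>
      funk D q.2 q.1) (𝓝[D ×ˢ closure D] (p₀, y₀)) (𝓝 (funk D y₀ p₀))
    rw [funk_eq hne]
    apply hlog.congr'
    have hne_ev : ∀ᶠ q : EuclideanSpace ℝ (Fin n) × EuclideanSpace ℝ (Fin n) in
        𝓝[D ×ˢ closure D] (p₀, y₀), q.1 ≠ q.2 := by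
      apply eventually_nhdsWithin_of_eventually_nhds
      exact (isOpen_ne_fun continuous_fst continuous_snd).eventually_mem h
    filter_upwards [hne_ev] with q hq
    rw [funk_eq (fun h' => hq h'.symm)]

lemma tendsto_funk_seg (hconv : Convex ℝ D) (hopen : IsOpen D) {R : ℝ}
    (hR : ∀ w ∈ closure D, ‖w‖ ≤ R)
    {x b : EuclideanSpace ℝ (Fin n)} (hx : x ∈ closure D) (hxD : x ∉ D) (hb : b ∈ D) :
    Tendsto (fun j : ℕ => funk D x (x + ((j:ℝ)+2)⁻¹ • (b - x))) atTop (𝓝 0) := by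
  have hbc : x + (1:ℝ) • (b - x) ∈ closure D := by
    rw [one_smul, add_sub_cancel]; exact subset_closure hb
  have hpD : ∀ j : ℕ, x + ((j:ℝ)+2)⁻¹ • (b - x) ∈ D := by
    intro j
    have h0 : (0:ℝ) < ((j:ℝ)+2)⁻¹ := by positivity
    have h1 : ((j:ℝ)+2)⁻¹ ≤ 1 := by
      rw [inv_le_one_iff₀]; right; push_cast; linarith [Nat.cast_nonneg (α := ℝ) j]
    exact seg_mem hconv hopen hx hb hbc h0 (Or.inl h1)
  apply squeeze_zero (fun j => funk_nonneg hopen hR hx (hpD j))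
    (g := fun j : ℕ => 1 / ((j:ℝ) + 1))
  · intro j
    have hj2 : (0:ℝ) < (j:ℝ) + 2 := by positivity
    have hne : x + ((j:ℝ)+2)⁻¹ • (b - x) ≠ x := fun h' => hxD (h' ▸ hpD j)
    have hmem : x + ((j:ℝ)+2) • ((x + ((j:ℝ)+2)⁻¹ • (b - x)) - x) ∈ D := by
      have e : x + ((j:ℝ)+2) • ((x + ((j:ℝ)+2)⁻¹ • (b - x)) - x) = b := by
        rw [add_sub_cancel_left, smul_smul, mul_inv_cancel₀ (ne_of_gt hj2), one_smul,
          add_sub_cancel]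
      rw [e]; exact hb
    have := funk_le hconv hopen hR hx (hpD j) hne
      (N := (j:ℝ)+2) (by push_cast; linarith [Nat.cast_nonneg (α := ℝ) j]) hmem
    calc funk D x (x + ((j:ℝ)+2)⁻¹ • (b - x)) ≤ 1 / ((j:ℝ) + 2 - 1) := this
    _ = 1 / ((j:ℝ) + 1) := by ring_nf
  · exact tendsto_one_div_add_atTop_nhds_zero_nat

end RFaux

open RFaux

/-- For a bounded open convex domain `D`, the reverse-Funk
distance `R(x,y) = F(y,x)` extends continuously from `D × D` to `D × closure D`,
and a sequence `z_n` in `D` converges to the reverse-Funk horofunction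
`r_x = R(·,x) − R(b,x)`, `x ∈ ∂D` (i.e. `R(·,z_n) − R(b,z_n) → r_x` uniformly on
sets bounded in the Hilbert metric), if and only if `z_n → x` in the Euclidean
topology. -/
theorem reverseFunk_extends_and_horofunction_convergence {n : ℕ}
    (D : Set (EuclideanSpace ℝ (Fin n)))
    (hopen : IsOpen D) (hbdd : Bornology.IsBounded D) (hconv : Convex ℝ D)
    (b : EuclideanSpace ℝ (Fin n)) (hb : b ∈ D) :
    ∃ Rbar : EuclideanSpace ℝ (Fin n) → EuclideanSpace ℝ (Fin n) → ℝ,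
      ContinuousOn (fun p : EuclideanSpace ℝ (Fin n) × EuclideanSpace ℝ (Fin n) =>
        Rbar p.1 p.2) (D ×ˢ closure D) ∧
      (∀ x ∈ D, ∀ y ∈ D, Rbar x y = funk D y x) ∧
      (∀ x ∈ frontier D, ∀ z : ℕ → EuclideanSpace ℝ (Fin n), (∀ m, z m ∈ D) →
        (Tendsto z atTop (𝓝 x) ↔
          ∀ s : Set (EuclideanSpace ℝ (Fin n)), s ⊆ D →
            (∃ M : ℝ, ∀ p ∈ s, ∀ q ∈ s, funk D p q + funk D q p ≤ M) →
            TendstoUniformlyOn (fun m p => Rbar p (z m) - Rbar b (z m))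
              (fun p => Rbar p x - Rbar b x) atTop s)) := by
  obtain ⟨R, hR⟩ := hbdd.closure.exists_norm_le
  have hcomp : IsCompact (closure D) :=
    Metric.isCompact_of_isClosed_isBounded isClosed_closure hbdd.closure
  refine ⟨fun p y => funk D y p, funk_continuousOn hconv hopen hR, fun _ _ _ _ => rfl, ?_⟩
  intro x hx z hz
  rw [hopen.frontier_eq] at hx
  obtain ⟨hxc, hxD⟩ := hx
  constructor
  · -- Tendsto z → uniform convergence
    intro hzx s hsD hM
    rcases s.eq_empty_or_nonempty with rfl | ⟨p₀, hp₀⟩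
    · exact tendstoUniformlyOn_empty
    obtain ⟨M, hM⟩ := hM
    have hp₀D : p₀ ∈ D := hsD hp₀
    have hM0 : 0 ≤ M := by
      have := hM p₀ hp₀ p₀ hp₀
      rw [funk_self] at this
      linarith
    set lam := 1 - Real.exp (-(M+1)) with hlam
    have hexp0 : 0 < Real.exp (-(M+1)) := Real.exp_pos _
    have hexp1 : Real.exp (-(M+1)) < 1 := Real.exp_lt_one_iff.2 (by linarith)
    have hlam0 : 0 < lam := by rw [hlam]; linarith
    have hlam1 : lam < 1 := by rw [hlam]; linarith
    set K : Set (EuclideanSpace ℝ (Fin n)) :=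
      (fun c => p₀ + lam • (c - p₀)) '' closure D with hK
    have hKco : IsCompact K :=
      hcomp.image (continuous_const.add ((continuous_id.sub continuous_const).const_smul lam))
    have hKD : K ⊆ D := by
      rintro _ ⟨c, hc, rfl⟩
      show p₀ + lam • (c - p₀) ∈ D
      have hpi : p₀ ∈ interior D := by rwa [hopen.interior_eq]
      have key : (1 - lam) • p₀ + lam • c = p₀ + lam • (c - p₀) := by module
      have := hconv.combo_interior_closure_mem_interior (a := 1 - lam) (b := lam) hpi hc
        (by linarith) (le_of_lt hlam0) (by ring)
      rw [key, hopen.interior_eq] at this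
      exact this
    have hsK : s ⊆ K := by
      intro p hp
      by_cases hpp : p = p₀
      · exact ⟨p₀, subset_closure hp₀D, by rw [hpp]; simp⟩
      · have hpD : p ∈ D := hsD hp
        have hne : p ≠ p₀ := hpp
        have hp₀c : p₀ ∈ closure D := subset_closure hp₀D
        have h1 : funk D p₀ p ≤ M := by
          have h := hM p₀ hp₀ p hp
          have h2 : 0 ≤ funk D p p₀ := funk_nonneg hopen hR (subset_closure hpD) hp₀D
          linarith
        have hfp : 0 < funk D p₀ p := funk_pos hopen hR hp₀c hpD hne
        have hMpos : 0 < M := lt_of_lt_of_le hfp h1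
        have bdd := seg_bddAbove hR hp₀c hne
        set T := sSup (seg D p₀ p) with hT
        have hT1 : 1 < T := T_gt_one hopen hpD hne bdd
        have hTE : T / (T - 1) ≤ Real.exp M := by
          rw [funk_eq (fun h' => hne (by rw [h']))] at h1
          exact (Real.log_le_iff_le_exp (div_pos (by linarith) (by linarith))).1 h1
        set E := Real.exp M with hE
        have hE1 : 1 < E := by
          rw [hE, ← Real.exp_zero]
          exact Real.exp_lt_exp.2 hMpos
        have hTle : T ≤ E * (T - 1) := by
          rw [div_le_iff₀ (by linarith)] at hTE
          linarith [hTE]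
        set a := Real.exp (-(M+1)) with ha
        have haE : a * E = Real.exp (-1) := by
          rw [ha, hE, ← Real.exp_add]; ring_nf
        have haE1 : a * E < 1 := by
          rw [haE, ← Real.exp_zero]
          exact Real.exp_lt_exp.2 (by norm_num)
        have hgoal : 1 < T * lam := by
          have h1 : E ≤ T * (E - 1) := by nlinarith
          nlinarith
        have hlt : lam⁻¹ < T := by
          rw [← one_div]
          exact (div_lt_iff₀ hlam0).2 (by linarith [hgoal])
        have hcmem : p₀ + lam⁻¹ • (p - p₀) ∈ D :=
          Ioo_subset_seg hconv hopen hp₀c hpD ⟨inv_pos.2 hlam0, hlt⟩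
        refine ⟨p₀ + lam⁻¹ • (p - p₀), subset_closure hcmem, ?_⟩
        show p₀ + lam • (p₀ + lam⁻¹ • (p - p₀) - p₀) = p
        rw [add_sub_cancel_left, smul_smul, mul_inv_cancel₀ (ne_of_gt hlam0), one_smul,
          add_sub_cancel]
    -- uniform continuity on (insert b K) ×ˢ closure D
    set K' : Set (EuclideanSpace ℝ (Fin n)) := insert b K with hK'
    have hK'co : IsCompact K' := hKco.insert b
    have hK'D : K' ⊆ D := by
      rw [hK', Set.insert_subset_iff]; exact ⟨hb, hKD⟩
    have hUC : UniformContinuousOn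
        (fun q : EuclideanSpace ℝ (Fin n) × EuclideanSpace ℝ (Fin n) => funk D q.2 q.1)
        (K' ×ˢ closure D) :=
      (hK'co.prod hcomp).uniformContinuousOn_of_continuous
        ((funk_continuousOn hconv hopen hR).mono (Set.prod_mono hK'D subset_rfl))
    rw [Metric.tendstoUniformlyOn_iff]
    intro ε hε
    obtain ⟨δ, hδ, hδ'⟩ := Metric.uniformContinuousOn_iff.1 hUC (ε/2) (by linarith)
    have hev : ∀ᶠ m in atTop, dist (z m) x < δ := by
      have := hzx (Metric.ball_mem_nhds x hδ)
      simpa [Metric.mem_ball] using this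
    filter_upwards [hev] with m hm
    intro p hp
    have key : ∀ w ∈ K', |funk D x w - funk D (z m) w| < ε/2 := by
      intro w hw
      have h1 : (w, z m) ∈ K' ×ˢ closure D := ⟨hw, subset_closure (hz m)⟩
      have h2 : (w, x) ∈ K' ×ˢ closure D := ⟨hw, hxc⟩
      have hd : dist ((w, z m) : _ × _) (w, x) < δ := by
        rw [Prod.dist_eq]
        simp only [dist_self]
        rw [max_eq_right dist_nonneg]
        exact hm
      have := hδ' _ h1 _ h2 hd
      rw [Real.dist_eq] at this
      rw [abs_sub_comm]
      exact this
    have hkp : |funk D x p - funk D (z m) p| < ε/2 :=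
      key p (Set.mem_insert_of_mem _ (hsK hp))
    have hkb : |funk D x b - funk D (z m) b| < ε/2 := key b (Set.mem_insert _ _)
    rw [Real.dist_eq]
    have he : (funk D x p - funk D x b) - (funk D (z m) p - funk D (z m) b)
        = (funk D x p - funk D (z m) p) - (funk D x b - funk D (z m) b) := by ring
    rw [he]
    calc |(funk D x p - funk D (z m) p) - (funk D x b - funk D (z m) b)|
        ≤ |funk D x p - funk D (z m) p| + |funk D x b - funk D (z m) b| := abs_sub _ _
    _ < ε := by linarith
  · -- uniform convergence → Tendsto z
    intro H
    by_contra hnot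
    rw [Metric.tendsto_atTop] at hnot
    push_neg at hnot
    obtain ⟨ε, hε, hfreq⟩ := hnot
    obtain ⟨φ, hφmono, hφ⟩ := Filter.extraction_of_frequently_atTop
      ((Filter.frequently_atTop).2 hfreq)
    obtain ⟨x', hx'c, σ, hσmono, hσ⟩ :=
      hcomp.tendsto_subseq (x := fun k => z (φ k)) (fun k => subset_closure (hz (φ k)))
    have hdist : ε ≤ dist x' x := by
      have h1 : Tendsto (fun k => dist (z (φ (σ k))) x) atTop (𝓝 (dist x' x)) :=
        hσ.dist tendsto_const_nhds
      exact ge_of_tendsto h1 (Filter.Eventually.of_forall fun k => hφ (σ k))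
    have hxx' : x ≠ x' := by
      intro h
      rw [← h, dist_self] at hdist
      linarith
    -- pointwise limits agree
    have hpt : ∀ p ∈ D, funk D x p - funk D x b = funk D x' p - funk D x' b := by
      intro p hp
      have hs2 : ({p, b} : Set (EuclideanSpace ℝ (Fin n))) ⊆ D := by
        rw [Set.insert_subset_iff, Set.singleton_subset_iff]
        exact ⟨hp, hb⟩
      have hMex : ∃ M : ℝ, ∀ a ∈ ({p, b} : Set (EuclideanSpace ℝ (Fin n))),
          ∀ c ∈ ({p, b} : Set (EuclideanSpace ℝ (Fin n))),
          funk D a c + funk D c a ≤ M := by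
        refine ⟨funk D p b + funk D b p, ?_⟩
        have hnn1 : 0 ≤ funk D p b := funk_nonneg hopen hR (subset_closure hp) hb
        have hnn2 : 0 ≤ funk D b p := funk_nonneg hopen hR (subset_closure hb) hp
        rintro a (rfl | rfl) c (rfl | rfl) <;> first
          | (simp only [funk_self]; linarith)
          | linarith
      have hTU := H {p, b} hs2 hMex
      have h1 : Tendsto (fun m => funk D (z m) p - funk D (z m) b) atTop
          (𝓝 (funk D x p - funk D x b)) := hTU.tendsto_at (Set.mem_insert _ _)
      have h2 : Tendsto (fun k => funk D (z (φ (σ k))) p - funk D (z (φ (σ k))) b) atTop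
          (𝓝 (funk D x p - funk D x b)) :=
        h1.comp ((hφmono.comp hσmono).tendsto_atTop)
      have hcw : ∀ w ∈ D, Tendsto (fun k => funk D (z (φ (σ k))) w) atTop
          (𝓝 (funk D x' w)) := by
        intro w hw
        have hcwa := funk_continuousOn hconv hopen hR (w, x') ⟨hw, hx'c⟩
        have htd : Tendsto (fun k => ((w, z (φ (σ k))) :
            EuclideanSpace ℝ (Fin n) × EuclideanSpace ℝ (Fin n))) atTop
            (𝓝[D ×ˢ closure D] (w, x')) := by
          rw [tendsto_nhdsWithin_iff]
          exact ⟨tendsto_const_nhds.prodMk_nhds hσ,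
            Filter.Eventually.of_forall fun k => ⟨hw, subset_closure (hz (φ (σ k)))⟩⟩
        exact hcwa.tendsto.comp htd
      have h3 : Tendsto (fun k => funk D (z (φ (σ k))) p - funk D (z (φ (σ k))) b) atTop
          (𝓝 (funk D x' p - funk D x' b)) := (hcw p hp).sub (hcw b hb)
      exact tendsto_nhds_unique h2 h3
    set c := funk D x b - funk D x' b with hcdef
    have hpc : ∀ p ∈ D, funk D x p - funk D x' p = c := by
      intro p hp
      have := hpt p hp
      rw [hcdef]
      linarith
    have hseg1 := tendsto_funk_seg hconv hopen hR hxc hxD hb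
    set pj := fun j : ℕ => x + ((j:ℝ)+2)⁻¹ • (b - x) with hpjdef
    have hpjD : ∀ j, pj j ∈ D := by
      intro j
      have hbc : x + (1:ℝ) • (b - x) ∈ closure D := by
        rw [one_smul, add_sub_cancel]; exact subset_closure hb
      have h0 : (0:ℝ) < ((j:ℝ)+2)⁻¹ := by positivity
      have h1 : ((j:ℝ)+2)⁻¹ ≤ 1 := by
        rw [inv_le_one_iff₀]; right; linarith [Nat.cast_nonneg (α := ℝ) j]
      exact seg_mem hconv hopen hxc hb hbc h0 (Or.inl h1)
    by_cases hx'D : x' ∈ D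
    · -- x' interior : c = funk D x x' > 0 but also c ≤ 0
      have hcpos : 0 < c := by
        have h := hpc x' hx'D
        rw [funk_self] at h
        have := funk_pos hopen hR hxc hx'D hxx'.symm
        linarith
      have hle : ∀ j, c ≤ funk D x (pj j) := by
        intro j
        have h := hpc (pj j) (hpjD j)
        have hnn := funk_nonneg hopen hR hx'c (hpjD j)
        linarith
      have : c ≤ 0 := ge_of_tendsto hseg1 (Filter.Eventually.of_forall hle)
      linarith
    · -- x' on the boundary
      have h2 : Tendsto (fun j => funk D x' (pj j)) atTop (𝓝 (-c)) := by
        have heq : ∀ j, funk D x (pj j) - c = funk D x' (pj j) := by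
          intro j
          have := hpc (pj j) (hpjD j)
          linarith
        have := hseg1.sub (tendsto_const_nhds (x := c))
        rw [zero_sub] at this
        exact this.congr heq
      have hcle : 0 ≤ -c := ge_of_tendsto h2
        (Filter.Eventually.of_forall fun j => funk_nonneg hopen hR hx'c (hpjD j))
      have hseg2 := tendsto_funk_seg hconv hopen hR hx'c hx'D hb
      set qj := fun j : ℕ => x' + ((j:ℝ)+2)⁻¹ • (b - x') with hqjdef
      have hqjD : ∀ j, qj j ∈ D := by
        intro j
        have hbc : x' + (1:ℝ) • (b - x') ∈ closure D := by
          rw [one_smul, add_sub_cancel]; exact subset_closure hb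
        have h0 : (0:ℝ) < ((j:ℝ)+2)⁻¹ := by positivity
        have h1 : ((j:ℝ)+2)⁻¹ ≤ 1 := by
          rw [inv_le_one_iff₀]; right; linarith [Nat.cast_nonneg (α := ℝ) j]
        exact seg_mem hconv hopen hx'c hb hbc h0 (Or.inl h1)
      have h3 : Tendsto (fun j => funk D x (qj j)) atTop (𝓝 c) := by
        have heq : ∀ j, funk D x' (qj j) + c = funk D x (qj j) := by
          intro j
          have := hpc (qj j) (hqjD j)
          linarith
        have := hseg2.add (tendsto_const_nhds (x := c))
        rw [zero_add] at this
        exact this.congr heq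
      have h4 : 0 ≤ c := ge_of_tendsto h3
        (Filter.Eventually.of_forall fun j => funk_nonneg hopen hR hxc (hqjD j))
      have hc0 : c = 0 := le_antisymm (by linarith) h4
      rw [hc0, neg_zero] at h2
      set C := max 2 (4 * R / ‖x - x'‖) with hCdef
      have hC2 : 2 ≤ C := le_max_left _ _
      have hxx'n : 0 < ‖x - x'‖ := by
        rw [norm_pos_iff]; exact sub_ne_zero_of_ne hxx'
      have hR0 : 0 ≤ R := le_trans (norm_nonneg b) (hR b (subset_closure hb))
      have hev : ∀ᶠ j in atTop, Real.log (C / (C-1)) ≤ funk D x' (pj j) := by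
        have hlim : Tendsto (fun j : ℕ => ((j:ℝ)+2)⁻¹ * ‖b - x‖) atTop (𝓝 0) := by
          have h0 : Tendsto (fun j : ℕ => ((j:ℝ)+2)⁻¹) atTop (𝓝 0) := by
            apply Tendsto.comp tendsto_inv_atTop_zero
            apply Filter.tendsto_atTop_add_const_right
            exact tendsto_natCast_atTop_atTop
          have := h0.mul_const ‖b - x‖
          rwa [zero_mul] at this
        have hevlt : ∀ᶠ j : ℕ in atTop, ((j:ℝ)+2)⁻¹ * ‖b - x‖ < ‖x - x'‖/2 :=
          hlim.eventually_lt_const (by positivity)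
        filter_upwards [hevlt] with j hj
        have hnormeq : ‖pj j - x‖ = ((j:ℝ)+2)⁻¹ * ‖b - x‖ := by
          rw [hpjdef]
          simp only [add_sub_cancel_left]
          rw [norm_smul, Real.norm_eq_abs, abs_of_pos (by positivity)]
        have htri : ‖x - x'‖ ≤ ‖x - pj j‖ + ‖pj j - x'‖ := by
          have he : x - x' = (x - pj j) + (pj j - x') := by abel
          rw [he]
          exact norm_add_le _ _
        have hd : ‖x - x'‖/2 ≤ ‖pj j - x'‖ := by
          rw [norm_sub_rev] at hnormeq
          rw [hnormeq] at htri
          linarith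
        have hne : pj j ≠ x' := by
          intro h
          exact hx'D (h ▸ hpjD j)
        apply funk_lower hopen hx'c (hpjD j) hne hC2
        intro t ht
        have hle1 : t ≤ 2 * R / ‖pj j - x'‖ := seg_le hR hx'c hne ht
        have hle2 : 2 * R / ‖pj j - x'‖ ≤ 2 * R / (‖x - x'‖/2) :=
          div_le_div_of_nonneg_left (by linarith) (by linarith) hd
        have he3 : 2 * R / (‖x - x'‖/2) = 4 * R / ‖x - x'‖ := by
          field_simp
          ring
        calc t ≤ 2 * R / ‖pj j - x'‖ := hle1
        _ ≤ 2 * R / (‖x - x'‖/2) := hle2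
        _ = 4 * R / ‖x - x'‖ := he3
        _ ≤ C := le_max_right _ _
      have hfinal : Real.log (C / (C-1)) ≤ 0 := ge_of_tendsto h2 hev
      exact absurd hfinal (not_le.2 (log_ratio_pos hC2))

end
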